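/- Let T ∈ B(H,K) with 0 < [T] ≤ ‖T‖. Then for all x, y ∈ H with ⟨x,y⟩ = 0, we have |⟨Tx,Ty⟩| ≤ (1 − [T]²/‖T‖²)·‖Tx‖·‖Ty‖. -/

import Mathlib

open scoped RealInnerProductSpace

/-- The minimum modulus `[T]` of a bounded linear map: the infimum of `‖T x‖`
over unit vectors `x`. -/
noncomputable def minMod {H K : Type*} [NormedAddCommGroup H] [InnerProductSpace ℝ H]
    [NormedAddCommGroup K] [InnerProductSpace ℝ K] (T : H →L[ℝ] K) : ℝ :=
  ⨅ x : {x : H // ‖x‖ = 1}, ‖T x‖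

/-- `T` is `(ε, c)`-angle preserving. -/
def AnglePres {H K : Type*} [NormedAddCommGroup H] [InnerProductSpace ℝ H]
    [NormedAddCommGroup K] [InnerProductSpace ℝ K] (c ε : ℝ) (T : H →L[ℝ] K) : Prop :=
  ∀ x y : H, ⟪x, y⟫ = c * ‖x‖ * ‖y‖ →
    |⟪T x, T y⟫ - c * ‖T x‖ * ‖T y‖| ≤ ε * ‖T x‖ * ‖T y‖

/-- `ε̂(T, c)`: the smallest `ε` for which `T` is `(ε, c)`-angle preserving. -/
noncomputable def epsHat {H K : Type*} [NormedAddCommGroup H] [InnerProductSpace ℝ H]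
    [NormedAddCommGroup K] [InnerProductSpace ℝ K] (c : ℝ) (T : H →L[ℝ] K) : ℝ :=
  sInf {ε : ℝ | ε ∈ Set.Icc 0 (1 + |c|) ∧ AnglePres c ε T}

theorem stmt_18 {H K : Type*} [NormedAddCommGroup H] [InnerProductSpace ℝ H] [CompleteSpace H]
    [NormedAddCommGroup K] [InnerProductSpace ℝ K] [CompleteSpace K]
    (hH : 2 ≤ Module.rank ℝ H)
    (T : H →L[ℝ] K) (hmin : 0 < minMod T) (hle : minMod T ≤ ‖T‖) :
    ∀ x y : H, ⟪x, y⟫ = 0 →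
      |⟪T x, T y⟫| ≤ (1 - (minMod T) ^ 2 / ‖T‖ ^ 2) * ‖T x‖ * ‖T y‖ := by
  intro x y hxy
  set m := minMod T with hmdef
  have hM : (0:ℝ) < ‖T‖ := lt_of_lt_of_le hmin hle
  have key : ∀ z : H, m * ‖z‖ ≤ ‖T z‖ := by
    intro z
    rcases eq_or_ne z 0 with rfl | hz
    · simp
    · have hzn : ‖z‖ ≠ 0 := norm_ne_zero_iff.mpr hz
      have hu : ‖(‖z‖⁻¹ • z)‖ = 1 := by
        rw [norm_smul, norm_inv, norm_norm, inv_mul_cancel₀ hzn]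
      have h1 : m ≤ ‖T (‖z‖⁻¹ • z)‖ := by
        have hbdd : BddBelow (Set.range fun x : {x : H // ‖x‖ = 1} => ‖T x‖) := by
          refine ⟨0, ?_⟩
          rintro _ ⟨i, rfl⟩
          exact norm_nonneg _
        exact ciInf_le hbdd ⟨_, hu⟩
      rw [map_smul, norm_smul, norm_inv, norm_norm] at h1
      have h2 := mul_le_mul_of_nonneg_right h1 (norm_nonneg z)
      calc m * ‖z‖ ≤ ‖z‖⁻¹ * ‖T z‖ * ‖z‖ := h2
        _ = ‖T z‖ := by field_simp
  rcases eq_or_ne (T x) 0 with h0 | hTx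
  · simp [h0]
  rcases eq_or_ne (T y) 0 with h0 | hTy
  · simp [h0]
  set a := ‖T x‖ with hadef
  set b := ‖T y‖ with hbdef
  have ha : 0 < a := norm_pos_iff.mpr hTx
  have hb : 0 < b := norm_pos_iff.mpr hTy
  have hxa : a ≤ ‖T‖ * ‖x‖ := T.le_opNorm x
  have hyb : b ≤ ‖T‖ * ‖y‖ := T.le_opNorm y
  set c := ⟪T x, T y⟫ with hcdef
  have hx2 : a^2 ≤ ‖T‖^2 * ‖x‖^2 := by nlinarith [norm_nonneg x, ha.le]
  have hy2 : b^2 ≤ ‖T‖^2 * ‖y‖^2 := by nlinarith [norm_nonneg y, hb.le]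
  have eT : ∀ s t : ℝ, ‖T (s • x + t • y)‖^2 = s^2*a^2 + 2*s*t*c + t^2*b^2 := by
    intro s t
    rw [map_add, map_smul, map_smul, @norm_add_sq_real, norm_smul, norm_smul,
      real_inner_smul_left, real_inner_smul_right]
    simp [abs_mul_abs_self, mul_pow]
    ring_nf
    rfl
  have eH : ∀ s t : ℝ, ‖(s • x + t • y)‖^2 = s^2*‖x‖^2 + t^2*‖y‖^2 := by
    intro s t
    rw [@norm_add_sq_real, norm_smul, norm_smul, real_inner_smul_left,
      real_inner_smul_right, hxy]
    simp [mul_pow]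
  have sq_key : ∀ s t : ℝ, m^2 * (s^2*‖x‖^2 + t^2*‖y‖^2) ≤ s^2*a^2 + 2*s*t*c + t^2*b^2 := by
    intro s t
    have h1 := key (s • x + t • y)
    have h2 := mul_le_mul h1 h1 (by positivity) (norm_nonneg _)
    have h3 : m^2 * ‖(s • x + t • y)‖^2 ≤ ‖T (s • x + t • y)‖^2 := by nlinarith [h2]
    rw [eT s t, eH s t] at h3
    exact h3
  have hp := sq_key b a
  have hn := sq_key b (-a)
  have goal2 : |c| * ‖T‖^2 ≤ (‖T‖^2 - m^2) * (a * b) := by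
    rcases abs_cases c with ⟨h1, _⟩ | ⟨h1, _⟩ <;> rw [h1] <;>
      nlinarith [mul_pos ha hb, sq_nonneg m, mul_le_mul_of_nonneg_left hx2 (mul_nonneg (sq_nonneg m) (sq_nonneg b)), mul_le_mul_of_nonneg_left hy2 (mul_nonneg (sq_nonneg m) (sq_nonneg a)), mul_pos (mul_pos ha hb) (mul_pos hM hM)]
  have hM2 : (0:ℝ) < ‖T‖^2 := by positivity
  rw [show (1 - m^2/‖T‖^2) * a * b = ((‖T‖^2 - m^2)*(a*b))/‖T‖^2 by field_simp,
    le_div_iff₀ hM2]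
  exact goal2
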